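/- arXiv:math/0611185 — 2 statements merged into one kernel-verified Lean document; each statement's English description precedes it below -/
import Mathlib

section
/- Let g̃ be the double coating metric on N = B(0,2) ⊂ ℝ³, equal on the annulus 1 < r < 2 to (F₁)_* g_e with F₁(x) = (r/2+1)x/r, and on the punctured ball 0 < r < 1 to the pushforward of the round metric of S³ of radius 1/π under the inverse exponential map from the south pole; in Fermi coordinates (ω, τ) from Σ = {r=1}, g̃ = dτ² + τ² dω² + O(τ⁴) on both sides. Then the matrix-valued function det(g̃)^{1/2} g̃^{jk} extends to a Lipschitz continuous function on all of N. -/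
/-- The tangential coefficient of the double coating metric in Fermi coordinates `(ω,τ)`
from the cloaking surface `Σ`: on the outside (`τ ≥ 0`, coming from the blow-up `F₁` of
the Euclidean metric) it is `τ²`, on the inside (`τ < 0`, coming from the round sphere
`S³_{1/π}` via the exponential map, with `τ = r − 1`) it is
`sin²(π(1+τ))/π² = sin²(πτ)/π²`. -/
noncomputable def fermiCoeff (τ : ℝ) : ℝ :=
  if 0 ≤ τ then τ ^ 2 else Real.sin (Real.pi * τ) ^ 2 / Real.pi ^ 2

/-- The double coating metric in Fermi coordinates: `g̃ = dτ² + fermiCoeff(τ) dω²`,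
represented (in a chart where the round metric `dω²` is normalized at the chosen point)
by the matrix `diag(1, fermiCoeff τ, fermiCoeff τ)`. -/
noncomputable def fermiMetric (τ : ℝ) : Matrix (Fin 3) (Fin 3) ℝ :=
  Matrix.diagonal ![1, fermiCoeff τ, fermiCoeff τ]

lemma abs_sin_sub_sin_le (x y : ℝ) : |Real.sin x - Real.sin y| ≤ |x - y| := by
  rw [Real.sin_sub_sin]
  calc |2 * Real.sin ((x - y) / 2) * Real.cos ((x + y) / 2)|
      = 2 * |Real.sin ((x - y) / 2)| * |Real.cos ((x + y) / 2)| := by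
        rw [abs_mul, abs_mul]; norm_num
    _ ≤ 2 * |(x - y) / 2| * 1 := by
        apply mul_le_mul (by
          apply mul_le_mul le_rfl Real.abs_sin_le_abs (abs_nonneg _) (by norm_num))
          (Real.abs_cos_le_one _) (abs_nonneg _) (by positivity)
    _ = |x - y| := by rw [abs_div, abs_two]; ring

lemma fermiCoeff_nonneg (τ : ℝ) : 0 ≤ fermiCoeff τ := by
  unfold fermiCoeff; split <;> positivity

lemma fermiCoeff_pos {τ : ℝ} (h1 : τ ∈ Set.Icc (-(1:ℝ)/2) (1/2)) (h2 : τ ≠ 0) :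
    0 < fermiCoeff τ := by
  unfold fermiCoeff
  rcases lt_or_ge τ 0 with h | h
  · rw [if_neg (not_le.2 h)]
    have hs : 0 < Real.sin (-(Real.pi * τ)) := by
      apply Real.sin_pos_of_pos_of_lt_pi
      · nlinarith [Real.pi_pos]
      · nlinarith [Real.pi_pos, h1.1]
    rw [Real.sin_neg] at hs
    have : Real.sin (Real.pi * τ) ≠ 0 := by linarith
    positivity
  · rw [if_pos h]
    have : τ ≠ 0 := h2
    positivity

lemma fermiCoeff_lip : ∀ a ∈ Set.Icc (-(1:ℝ)/2) (1/2), ∀ b ∈ Set.Icc (-(1:ℝ)/2) (1/2),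
    |fermiCoeff a - fermiCoeff b| ≤ |a - b| := by
  have key : ∀ x y : ℝ, |Real.sin x ^ 2 - Real.sin y ^ 2| ≤ 2 * |x - y| := by
    intro x y
    have h : Real.sin x ^ 2 - Real.sin y ^ 2
        = (Real.sin x - Real.sin y) * (Real.sin x + Real.sin y) := by ring
    rw [h, abs_mul]
    calc |Real.sin x - Real.sin y| * |Real.sin x + Real.sin y|
        ≤ |x - y| * 2 := by
          apply mul_le_mul (abs_sin_sub_sin_le x y) ?_ (abs_nonneg _) (abs_nonneg _)
          calc |Real.sin x + Real.sin y| ≤ |Real.sin x| + |Real.sin y| := abs_add_le _ _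
            _ ≤ 1 + 1 := add_le_add (Real.abs_sin_le_one x) (Real.abs_sin_le_one y)
            _ = 2 := by norm_num
      _ = 2 * |x - y| := by ring
  have hneg : ∀ a : ℝ, a < 0 → fermiCoeff a = Real.sin (Real.pi * a) ^ 2 / Real.pi ^ 2 := by
    intro a ha; simp [fermiCoeff, not_le.2 ha]
  have hpi : (2:ℝ) ≤ Real.pi := Real.two_le_pi
  have hpi0 : (0:ℝ) < Real.pi := Real.pi_pos
  -- bound on negative side: |c a - c b| ≤ |a-b| for a,b < 0
  have hnn : ∀ a b : ℝ, a < 0 → b < 0 → |fermiCoeff a - fermiCoeff b| ≤ |a - b| := by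
    intro a b ha hb
    rw [hneg a ha, hneg b hb, div_sub_div_same, abs_div,
      abs_of_pos (show (0:ℝ) < Real.pi ^ 2 by positivity)]
    rw [div_le_iff₀ (show (0:ℝ) < Real.pi ^ 2 by positivity)]
    calc |Real.sin (Real.pi * a) ^ 2 - Real.sin (Real.pi * b) ^ 2|
        ≤ 2 * |Real.pi * a - Real.pi * b| := key _ _
      _ = 2 * Real.pi * |a - b| := by rw [show Real.pi * a - Real.pi * b = Real.pi * (a - b) by ring, abs_mul, abs_of_pos hpi0]; ring
      _ ≤ |a - b| * Real.pi ^ 2 := by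
          nlinarith [mul_nonneg (sub_nonneg.2 hpi) (mul_nonneg hpi0.le (abs_nonneg (a - b)))]
  -- bound near zero on each side: c a ≤ |a| for a in Icc
  have hsmall : ∀ a ∈ Set.Icc (-(1:ℝ)/2) (1/2), fermiCoeff a ≤ |a| := by
    intro a ha
    have h2 : |a| ≤ 1/2 := abs_le.2 ⟨by linarith [ha.1], ha.2⟩
    rcases lt_or_ge a 0 with h | h
    · rw [hneg a h]
      have hs : |Real.sin (Real.pi * a)| ≤ |Real.pi * a| := Real.abs_sin_le_abs
      have : Real.sin (Real.pi * a) ^ 2 ≤ (Real.pi * a) ^ 2 := by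
        rw [← sq_abs, ← sq_abs (Real.pi * a)]; exact pow_le_pow_left₀ (abs_nonneg _) hs 2
      rw [div_le_iff₀ (by positivity)]
      have ha2 : a ^ 2 ≤ |a| := by nlinarith [abs_nonneg a, sq_abs a]
      nlinarith [sq_abs a, sq_nonneg a]
    · simp only [fermiCoeff, if_pos h]
      nlinarith [sq_abs a, abs_nonneg a]
  intro a ha b hb
  rcases lt_or_ge a 0 with h1 | h1 <;> rcases lt_or_ge b 0 with h2 | h2
  · exact hnn a b h1 h2
  · -- a < 0 ≤ b
    have := hsmall a ha; have := hsmall b hb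
    have h3 := fermiCoeff_nonneg a; have h4 := fermiCoeff_nonneg b
    have : |a| + |b| = |a - b| := by
      rw [abs_of_neg h1, abs_of_nonneg h2, abs_of_neg (by linarith)]; ring
    calc |fermiCoeff a - fermiCoeff b| ≤ fermiCoeff a + fermiCoeff b := abs_sub _ _ |>.trans (by
          rw [abs_of_nonneg h3, abs_of_nonneg h4])
      _ ≤ |a| + |b| := by linarith [hsmall a ha, hsmall b hb]
      _ = |a - b| := this
  · have := hsmall a ha; have := hsmall b hb
    have h3 := fermiCoeff_nonneg a; have h4 := fermiCoeff_nonneg b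
    have : |a| + |b| = |a - b| := by
      rw [abs_of_nonneg h1, abs_of_neg h2, abs_of_nonneg (by linarith)]; ring
    calc |fermiCoeff a - fermiCoeff b| ≤ fermiCoeff a + fermiCoeff b := abs_sub _ _ |>.trans (by
          rw [abs_of_nonneg h3, abs_of_nonneg h4])
      _ ≤ |a| + |b| := by linarith [hsmall a ha, hsmall b hb]
      _ = |a - b| := this
  · -- both ≥ 0
    simp only [fermiCoeff, if_pos h1, if_pos h2]
    have : a ^ 2 - b ^ 2 = (a + b) * (a - b) := by ring
    rw [this, abs_mul]
    have : |a + b| ≤ 1 := by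
      have := abs_le.2 ⟨(by linarith [ha.1] : -(1/2:ℝ) ≤ a), ha.2⟩
      have := abs_le.2 ⟨(by linarith [hb.1] : -(1/2:ℝ) ≤ b), hb.2⟩
      calc |a + b| ≤ |a| + |b| := abs_add_le _ _
        _ ≤ 1/2 + 1/2 := by gcongr <;> assumption
        _ = 1 := by norm_num
    nlinarith [abs_nonneg (a - b)]

/-- for the double coating metric, in Fermi coordinates both sides are
`dτ² + τ²dω² + O(τ⁴)`, and the matrix-valued function `det(g̃)^{1/2} g̃^{jk}` extends from
`τ ≠ 0` to a Lipschitz continuous function across the cloaking surface `{τ = 0}`. -/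
theorem double_coating_density_lipschitz :
    (∃ C > 0, ∀ τ ∈ Set.Icc (-(1:ℝ)/2) (1/2), |fermiCoeff τ - τ ^ 2| ≤ C * τ ^ 4) ∧
    ∃ (L : ℝ → Matrix (Fin 3) (Fin 3) ℝ) (K : NNReal),
      (∀ i j : Fin 3, LipschitzOnWith K (fun τ => L τ i j) (Set.Icc (-(1:ℝ)/2) (1/2))) ∧
      ∀ τ ∈ Set.Icc (-(1:ℝ)/2) (1/2), τ ≠ 0 →
        L τ = Real.sqrt (fermiMetric τ).det • (fermiMetric τ)⁻¹ := by
  constructor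
  · -- quantitative O(τ⁴)
    refine ⟨1000, by norm_num, fun τ hτ => ?_⟩
    rcases le_or_gt 0 τ with h | h
    · simp only [fermiCoeff, if_pos h]
      have : |τ ^ 2 - τ ^ 2| = 0 := by simp
      rw [this]; positivity
    · simp only [fermiCoeff, if_neg (not_le.2 h)]
      have hpi0 : (0:ℝ) < Real.pi := Real.pi_pos
      have hpi3 : (3:ℝ) < Real.pi := Real.pi_gt_three
      have hpi4 : Real.pi ≤ 4 := by linarith [Real.pi_le_four]
      set x := Real.pi * τ with hx
      have hform : Real.sin x ^ 2 / Real.pi ^ 2 - τ ^ 2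
          = (Real.sin x ^ 2 - x ^ 2) / Real.pi ^ 2 := by
        field_simp; ring
      rw [hform, abs_div, abs_of_pos (show (0:ℝ) < Real.pi ^ 2 by positivity)]
      rw [div_le_iff₀ (show (0:ℝ) < Real.pi ^ 2 by positivity)]
      rcases le_or_gt (|x|) 1 with hc | hc
      · -- Taylor estimate
        have hb := Real.sin_bound hc
        have h1 : |Real.sin x - x| ≤ |x| ^ 3 := by
          have : |Real.sin x - x| ≤ |Real.sin x - (x - x ^ 3 / 6)| + |x ^ 3 / 6| := by
            have : Real.sin x - x = (Real.sin x - (x - x ^ 3 / 6)) + (- x ^ 3 / 6) := by ring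
            rw [this]
            calc _ ≤ |Real.sin x - (x - x ^ 3 / 6)| + |(-x ^ 3 / 6)| := abs_add_le _ _
              _ = _ := by rw [abs_div, abs_div, abs_neg]
          have h2 : |x ^ 3 / 6| = |x| ^ 3 / 6 := by rw [abs_div, abs_pow]; norm_num
          have h3 : |x| ^ 4 ≤ |x| ^ 3 := pow_le_pow_of_le_one (abs_nonneg _) hc (by norm_num)
          calc |Real.sin x - x| ≤ |x| ^ 4 * (5/96) + |x| ^ 3 / 6 := by
                rw [h2] at this; linarith [pow_le_pow_of_le_one (abs_nonneg x) hc (show 4 ≤ 5 by norm_num), pow_nonneg (abs_nonneg x) 4]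
            _ ≤ |x| ^ 3 := by nlinarith [pow_nonneg (abs_nonneg x) 3]
        have h2 : |Real.sin x + x| ≤ 2 * |x| := by
          calc |Real.sin x + x| ≤ |Real.sin x| + |x| := abs_add_le _ _
            _ ≤ |x| + |x| := add_le_add Real.abs_sin_le_abs le_rfl
            _ = 2 * |x| := by ring
        have hkey : |Real.sin x ^ 2 - x ^ 2| ≤ 2 * |x| ^ 4 := by
          have hfac : Real.sin x ^ 2 - x ^ 2 = (Real.sin x - x) * (Real.sin x + x) := by ring
          rw [hfac, abs_mul]
          calc |Real.sin x - x| * |Real.sin x + x| ≤ |x| ^ 3 * (2 * |x|) := by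
                apply mul_le_mul h1 h2 (abs_nonneg _) (by positivity)
            _ = 2 * |x| ^ 4 := by ring
        have hx4 : |x| ^ 4 = Real.pi ^ 4 * τ ^ 4 := by
          rw [← abs_pow, abs_of_nonneg (show (0:ℝ) ≤ x ^ 4 by positivity), hx]
          ring
        calc |Real.sin x ^ 2 - x ^ 2| ≤ 2 * |x| ^ 4 := hkey
          _ = 2 * Real.pi ^ 4 * τ ^ 4 := by rw [hx4]; ring
          _ ≤ 1000 * τ ^ 4 * Real.pi ^ 2 := by
              have ht4 : (0:ℝ) ≤ τ ^ 4 := by positivity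
              have hp2 : Real.pi ^ 2 ≤ 16 := by nlinarith
              nlinarith [mul_nonneg ht4 (sq_nonneg Real.pi)]
      · -- far from 0: crude bound
        have hτ4 : (1:ℝ) ≤ Real.pi ^ 4 * τ ^ 4 := by
          have : 1 < |x| := hc
          have hxx : 1 ≤ x ^ 2 := by nlinarith [sq_abs x]
          have h2 : (1:ℝ) ≤ Real.pi ^ 2 * τ ^ 2 := by nlinarith [hx ▸ hxx]
          nlinarith [sq_nonneg (Real.pi ^ 2 * τ ^ 2 - 1)]
        have h1 : |Real.sin x ^ 2 - x ^ 2| ≤ 1 + x ^ 2 := by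
          have := Real.abs_sin_le_one x
          have hs : Real.sin x ^ 2 ≤ 1 := Real.sin_sq_le_one x
          have hs0 : 0 ≤ Real.sin x ^ 2 := sq_nonneg _
          rw [abs_le]; constructor <;> nlinarith [sq_nonneg x]
        have hx2 : x ^ 2 = Real.pi ^ 2 * τ ^ 2 := by rw [hx]; ring
        have hτ2 : τ ^ 2 ≤ 1/4 := by nlinarith [hτ.1, hτ.2]
        calc |Real.sin x ^ 2 - x ^ 2| ≤ 1 + x ^ 2 := h1
          _ = 1 + Real.pi ^ 2 * τ ^ 2 := by rw [hx2]
          _ ≤ 1 + 16 * (1/4) := by nlinarith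
          _ = 5 := by norm_num
          _ ≤ 1000 * τ ^ 4 * Real.pi ^ 2 := by
              have ht4 : (0:ℝ) ≤ τ ^ 4 := by positivity
              have hp2 : Real.pi ^ 2 ≤ 16 := by nlinarith
              have hp4 : Real.pi ^ 4 ≤ 16 * Real.pi ^ 2 := by
                nlinarith [mul_nonneg (sub_nonneg.2 hp2) (sq_nonneg Real.pi)]
              nlinarith [hτ4, mul_nonneg ht4 (sq_nonneg Real.pi)]
  · -- Lipschitz extension
    refine ⟨fun τ => Matrix.diagonal ![fermiCoeff τ, 1, 1], 1, ?_, ?_⟩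
    · intro i j
      by_cases hij : i = j
      · subst hij
        fin_cases i
        · -- entry (0,0) = fermiCoeff
          apply LipschitzOnWith.of_dist_le_mul
          intro a ha b hb
          simp only [Matrix.diagonal_apply_eq, Matrix.cons_val_zero]
          rw [Real.dist_eq, Real.dist_eq, NNReal.coe_one, one_mul]
          exact fermiCoeff_lip a ha b hb
        all_goals {
          apply LipschitzOnWith.of_dist_le_mul
          intro a _ b _
          simp [Matrix.diagonal_apply_eq, Real.dist_eq] }
      · apply LipschitzOnWith.of_dist_le_mul
        intro a _ b _
        simp [Matrix.diagonal_apply_ne _ hij, Real.dist_eq]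
    · intro τ hτ hτ0
      have hc : 0 < fermiCoeff τ := fermiCoeff_pos hτ hτ0
      have hdet : (fermiMetric τ).det = fermiCoeff τ ^ 2 := by
        simp [fermiMetric, Matrix.det_diagonal, Fin.prod_univ_three]; ring
      have hsqrt : Real.sqrt (fermiMetric τ).det = fermiCoeff τ := by
        rw [hdet, Real.sqrt_sq hc.le]
      have hinv : (fermiMetric τ)⁻¹
          = Matrix.diagonal ![1, (fermiCoeff τ)⁻¹, (fermiCoeff τ)⁻¹] := by
        apply Matrix.inv_eq_right_inv
        rw [fermiMetric, Matrix.diagonal_mul_diagonal]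
        have hv : (fun i => ![1, fermiCoeff τ, fermiCoeff τ] i * ![1, (fermiCoeff τ)⁻¹, (fermiCoeff τ)⁻¹] i)
            = fun _ => (1:ℝ) := by
          funext i; fin_cases i <;> simp [mul_inv_cancel₀ hc.ne']
        rw [hv, ← Matrix.diagonal_one]
      rw [hsqrt, hinv]
      ext i j
      fin_cases i <;> fin_cases j <;>
        simp [Matrix.smul_apply, Matrix.diagonal_apply, mul_inv_cancel₀ hc.ne']
end

section
/- Let F : M\γ → N\Σ be the cylindrical cloaking map on M = B₂(0,2)×ℝ ⊂ ℝ³ acting only radially, X(F(X⁻¹(r,θ,z))) = (f₁(r),θ,z) in cylindrical coordinates, with f₁(r) = r/2+1. Let DF_t⁻¹ be the differential of F⁻¹ restricted to the cylinder at distance t from Σ = {r=1}×ℝ. Then with η = ∂_θ and ζ = ∂_z: |η·(DF_t⁻¹ η)| ≤ Ct, ζ·(DF_t⁻¹ ζ) = 1, and ζ·(DF_t⁻¹ η) = η·(DF_t⁻¹ ζ) = 0. Consequently, if Ẽ = (F⁻¹)^*E for a smooth 1-form E, then the angular component of Ẽ satisfies |η·Ẽ| ≤ Ct on the cylinder {r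 = 1+ct}, while the vertical component ζ·Ẽ converges as t→0 to ζ·E restricted to the axis γ. -/
open Filter
open scoped RealInnerProductSpace

local notation "E3" => EuclideanSpace ℝ (Fin 3)

/-- Cylindrical radius. -/
noncomputable def rho (y : E3) : ℝ := Real.sqrt (y 0 ^ 2 + y 1 ^ 2)

/-- The inverse `F⁻¹` of the cylindrical cloaking map `F` (which acts only radially,
`(r,θ,z) ↦ (r/2+1, θ, z)` in cylindrical coordinates):
`F⁻¹(y) = (2(ρ−1)/ρ · y₁, 2(ρ−1)/ρ · y₂, y₃)` with `ρ = ρ(y)`. -/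
noncomputable def Fcylinv (y : E3) : E3 :=
  WithLp.toLp 2 (fun i => if (i : ℕ) < 2 then (2 * (rho y - 1) / rho y) * y i else y i)

/-- The unit angular vector `η = ∂_θ/|∂_θ|` at `y`. -/
noncomputable def etaVec (y : E3) : E3 :=
  (rho y)⁻¹ • WithLp.toLp 2 (fun i => if i = 0 then -y 1 else if i = 1 then y 0 else 0)

/-- The vertical vector `ζ = ∂_z`. -/
noncomputable def zetaVec : E3 := EuclideanSpace.single 2 (1 : ℝ)

/-- A point at cylindrical radius `1+t`, angle `θ`, height `z`. -/
noncomputable def cylPt (θ z t : ℝ) : E3 :=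
  WithLp.toLp 2 (fun i => if i = 0 then (1 + t) * Real.cos θ else if i = 1 then (1 + t) * Real.sin θ else z)

noncomputable def Pproj : E3 →L[ℝ] E3 :=
  (EuclideanSpace.proj 0).smulRight (EuclideanSpace.single 0 1) +
  (EuclideanSpace.proj 1).smulRight (EuclideanSpace.single 1 1)

noncomputable def Qmap (y : E3) : E3 →L[ℝ] ℝ :=
  (2 * y 0) • EuclideanSpace.proj 0 + (2 * y 1) • EuclideanSpace.proj 1

noncomputable def Jmap (y : E3) : E3 →L[ℝ] E3 :=
  ContinuousLinearMap.id ℝ _ + ((1 - 2 / rho y) • Pproj +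
    ((1 / rho y ^ 3) • Qmap y).smulRight (Pproj y))

lemma Pproj_apply (v : E3) (i : Fin 3) :
    Pproj v i = if (i : ℕ) < 2 then v i else 0 := by
  fin_cases i <;> simp [Pproj, EuclideanSpace.single_apply]

lemma Fcylinv_eq : Fcylinv = fun y : E3 => y + (1 - 2 / rho y) • Pproj y := by
  funext y
  ext i
  have h2 : (y + (1 - 2 / rho y) • Pproj y) i = y i + (1 - 2 / rho y) * Pproj y i := by
    simp [PiLp.add_apply, PiLp.smul_apply]
  rw [h2, Pproj_apply]
  rcases eq_or_ne (rho y) 0 with h0 | h0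
  · have hq : y 0 ^ 2 + y 1 ^ 2 ≤ 0 := Real.sqrt_eq_zero'.mp h0
    have h1 : y 0 = 0 := by nlinarith [sq_nonneg (y 0), sq_nonneg (y 1)]
    have h2' : y 1 = 0 := by nlinarith [sq_nonneg (y 0), sq_nonneg (y 1)]
    fin_cases i <;> simp [Fcylinv, h1, h2']
  · fin_cases i <;> simp [Fcylinv] <;> field_simp <;> ring

lemma hasFDerivAt_Fcylinv (y : E3) (hy : 0 < rho y) :
    HasFDerivAt Fcylinv (Jmap y) y := by
  have hρ : rho y ≠ 0 := ne_of_gt hy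
  have hqv : rho y ^ 2 = y 0 ^ 2 + y 1 ^ 2 := Real.sq_sqrt (by positivity)
  have h0 := (EuclideanSpace.proj (0 : Fin 3) : E3 →L[ℝ] ℝ).hasFDerivAt (x := y)
  have h1 := (EuclideanSpace.proj (1 : Fin 3) : E3 →L[ℝ] ℝ).hasFDerivAt (x := y)
  have hq : HasFDerivAt (fun v : E3 => v 0 ^ 2 + v 1 ^ 2) (Qmap y) y := by
    have heq : (fun v : E3 => v 0 ^ 2 + v 1 ^ 2) = fun v => v 0 * v 0 + v 1 * v 1 := by
      funext v; ring
    rw [heq]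
    have := (h0.mul h0).add (h1.mul h1)
    refine this.congr_fderiv ?_
    ext v
    simp [Qmap]
    ring
  have hqne : y 0 ^ 2 + y 1 ^ 2 ≠ 0 := by
    rw [← hqv]; positivity
  have hrho : HasFDerivAt rho ((1 / (2 * rho y)) • Qmap y) y := by
    have := hq.sqrt hqne
    exact this
  have hinv : HasFDerivAt (fun v : E3 => (rho v)⁻¹)
      ((-(rho y ^ 2)⁻¹) • ((1 / (2 * rho y)) • Qmap y)) y :=
    (hasDerivAt_inv hρ).comp_hasFDerivAt y hrho
  have hs : HasFDerivAt (fun v : E3 => 1 - 2 / rho v) ((1 / rho y ^ 3) • Qmap y) y := by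
    have h2 := (hinv.const_mul (2 : ℝ)).const_sub 1
    have heq : (fun v : E3 => 1 - 2 * (rho v)⁻¹) = fun v => 1 - 2 / rho v := by
      funext v; rw [div_eq_mul_inv]
    rw [heq] at h2
    refine h2.congr_fderiv ?_
    ext v
    simp only [ContinuousLinearMap.coe_smul', Pi.smul_apply, ContinuousLinearMap.neg_apply,
      smul_eq_mul]
    field_simp
  have := (hasFDerivAt_id y).add (hs.smul Pproj.hasFDerivAt)
  rw [Fcylinv_eq]
  exact this

lemma eta0 (y : E3) : etaVec y 0 = (rho y)⁻¹ * (-y 1) := by simp [etaVec]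
lemma eta1 (y : E3) : etaVec y 1 = (rho y)⁻¹ * y 0 := by simp [etaVec]
lemma eta2 (y : E3) : etaVec y 2 = 0 := by simp [etaVec]
lemma zeta0 : zetaVec 0 = 0 := by simp [zetaVec, EuclideanSpace.single_apply]
lemma zeta1 : zetaVec 1 = 0 := by simp [zetaVec, EuclideanSpace.single_apply]
lemma zeta2 : zetaVec 2 = 1 := by simp [zetaVec, EuclideanSpace.single_apply]

lemma Pproj_eta (y : E3) : Pproj (etaVec y) = etaVec y := by
  ext i
  rw [Pproj_apply]
  fin_cases i <;> simp [eta2]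

lemma Q_eta (y : E3) : Qmap y (etaVec y) = 0 := by
  simp [Qmap, eta0, eta1]
  ring

lemma Pproj_zeta : Pproj zetaVec = 0 := by
  ext i
  rw [Pproj_apply]
  fin_cases i <;> simp [zeta0, zeta1]

lemma Q_zeta (y : E3) : Qmap y zetaVec = 0 := by
  simp [Qmap, zeta0, zeta1]

lemma J_eta (y : E3) : Jmap y (etaVec y) = (2 - 2 / rho y) • etaVec y := by
  simp [Jmap, ContinuousLinearMap.add_apply, Pproj_eta, Q_eta]
  module

lemma J_zeta (y : E3) : Jmap y zetaVec = zetaVec := by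
  simp [Jmap, ContinuousLinearMap.add_apply, Pproj_zeta, Q_zeta]

lemma inner_eta_eta (y : E3) (h : rho y ≠ 0) : ⟪etaVec y, etaVec y⟫ = 1 := by
  have hqv : rho y ^ 2 = y 0 ^ 2 + y 1 ^ 2 := Real.sq_sqrt (by positivity)
  rw [PiLp.inner_apply]
  simp [RCLike.inner_apply, Fin.sum_univ_three, eta0, eta1, eta2]
  field_simp
  linear_combination hqv.symm

lemma inner_zeta_zeta : ⟪zetaVec, zetaVec⟫ = (1:ℝ) := by
  rw [PiLp.inner_apply]
  simp [RCLike.inner_apply, Fin.sum_univ_three, zeta0, zeta1, zeta2]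

lemma inner_zeta_eta (y : E3) : ⟪zetaVec, etaVec y⟫ = (0:ℝ) := by
  simp [PiLp.inner_apply, RCLike.inner_apply, Fin.sum_univ_three, eta0, eta1, eta2, zeta0, zeta1, zeta2]

lemma inner_eta_zeta (y : E3) : ⟪etaVec y, zetaVec⟫ = (0:ℝ) := by
  simp [PiLp.inner_apply, RCLike.inner_apply, Fin.sum_univ_three, eta0, eta1, eta2, zeta0, zeta1, zeta2]

lemma norm_eta (y : E3) (h : rho y ≠ 0) : ‖etaVec y‖ = 1 := by
  have h1 := real_inner_self_eq_norm_sq (etaVec y)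
  rw [inner_eta_eta y h] at h1
  nlinarith [norm_nonneg (etaVec y)]

lemma coeff_bound (y : E3) (hy : 1 < rho y) : |2 - 2 / rho y| ≤ 2 * (rho y - 1) := by
  have hρ0 : (0:ℝ) < rho y := by linarith
  have h1 : 2 - 2 / rho y = (2 * rho y - 2) / rho y := by field_simp
  have h2 : 0 ≤ 2 - 2 / rho y := by
    rw [h1]
    apply div_nonneg <;> linarith
  rw [abs_of_nonneg h2, h1, div_le_iff₀ hρ0]
  nlinarith

noncomputable def Wvec (θ : ℝ) : E3 :=
  WithLp.toLp 2 (fun i => if i = 0 then Real.cos θ else if i = 1 then Real.sin θ else 0)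

lemma rho_cylPt (θ z t : ℝ) (ht : 0 ≤ t) : rho (cylPt θ z t) = 1 + t := by
  have h : (cylPt θ z t) 0 ^ 2 + (cylPt θ z t) 1 ^ 2 = (1 + t) ^ 2 := by
    have hs := Real.sin_sq_add_cos_sq θ
    simp only [cylPt]
    norm_num
    nlinarith
  rw [rho, h, Real.sqrt_sq (by linarith)]

lemma Fcylinv_cylPt (θ z t : ℝ) (ht : 0 < t) :
    Fcylinv (cylPt θ z t) = (2 * t) • Wvec θ + z • zetaVec := by
  have hρ := rho_cylPt θ z t ht.le
  have h1t : (1 : ℝ) + t ≠ 0 := by linarith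
  ext i
  have h2 : ((2 * t) • Wvec θ + z • zetaVec) i = 2 * t * Wvec θ i + z * zetaVec i := by
    simp [PiLp.add_apply, PiLp.smul_apply]
  rw [h2, Fcylinv, hρ]
  fin_cases i <;>
    simp [Fcylinv, hρ, Wvec, zetaVec, EuclideanSpace.single_apply, cylPt] <;>
    field_simp <;> ring

lemma axis_pt (z : ℝ) : (WithLp.toLp 2 (fun i => if i = 2 then z else 0) : E3) = z • zetaVec := by
  ext i
  fin_cases i <;> simp [zetaVec, EuclideanSpace.single_apply, PiLp.smul_apply]


/-- for the cylindrical cloaking map, the differential `J = DF⁻¹` at a point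
at distance `t = ρ−1` from the cloaking surface `Σ = {ρ=1}` satisfies
`|η·(Jη)| ≤ Ct`, `ζ·(Jζ) = 1`, `ζ·(Jη) = η·(Jζ) = 0`.  Consequently the pullback
`Ẽ = (F⁻¹)^*E` of a continuous 1-form `E` has angular component `|η·Ẽ| ≤ Ct‖E∘F⁻¹‖`,
while its vertical component converges, as `t → 0⁺`, to the vertical component `ζ·E`
of `E` on the axis `γ`. -/
theorem cylindrical_jacobian_components :
    (∃ C > 0, ∀ y : E3, 1 < rho y → rho y < 2 →
      ∃ J : E3 →L[ℝ] E3, HasFDerivAt Fcylinv J y ∧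
        |⟪etaVec y, J (etaVec y)⟫| ≤ C * (rho y - 1) ∧
        ⟪zetaVec, J zetaVec⟫ = 1 ∧
        ⟪zetaVec, J (etaVec y)⟫ = 0 ∧
        ⟪etaVec y, J zetaVec⟫ = 0 ∧
        (∀ Efield : E3 → E3,
          |⟪Efield (Fcylinv y), J (etaVec y)⟫| ≤ C * (rho y - 1) * ‖Efield (Fcylinv y)‖)) ∧
    (∀ Efield : E3 → E3, Continuous Efield → ∀ θ z : ℝ,
      Tendsto (fun t : ℝ => ⟪Efield (Fcylinv (cylPt θ z t)), zetaVec⟫)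
        (nhdsWithin 0 (Set.Ioi 0))
        (nhds ⟪Efield (WithLp.toLp 2 (fun i => if i = 2 then z else 0)), zetaVec⟫)) := by
  constructor
  · refine ⟨2, two_pos, fun y hy1 hy2 => ?_⟩
    have hρ : rho y ≠ 0 := by intro h; rw [h] at hy1; linarith
    refine ⟨Jmap y, hasFDerivAt_Fcylinv y (by linarith), ?_, ?_, ?_, ?_, ?_⟩
    · rw [J_eta, real_inner_smul_right, inner_eta_eta y hρ, mul_one]
      exact coeff_bound y hy1
    · rw [J_zeta]; exact inner_zeta_zeta
    · rw [J_eta, real_inner_smul_right, inner_zeta_eta, mul_zero]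
    · rw [J_zeta]; exact inner_eta_zeta y
    · intro E
      calc |⟪E (Fcylinv y), Jmap y (etaVec y)⟫|
          ≤ ‖E (Fcylinv y)‖ * ‖Jmap y (etaVec y)‖ := abs_real_inner_le_norm _ _
        _ = ‖E (Fcylinv y)‖ * |2 - 2 / rho y| := by
            rw [J_eta, norm_smul, Real.norm_eq_abs, norm_eta y hρ, mul_one]
        _ ≤ ‖E (Fcylinv y)‖ * (2 * (rho y - 1)) :=
            mul_le_mul_of_nonneg_left (coeff_bound y hy1) (norm_nonneg _)
        _ = 2 * (rho y - 1) * ‖E (Fcylinv y)‖ := by ring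
  · intro E hE θ z
    have hcont : Continuous (fun t : ℝ => (2 * t) • Wvec θ + z • zetaVec) :=
      ((continuous_const.mul continuous_id).smul continuous_const).add continuous_const
    have h0 : (fun t : ℝ => (2 * t) • Wvec θ + z • zetaVec) 0 = z • zetaVec := by
      simp
    have hlim : Tendsto (fun t : ℝ => Fcylinv (cylPt θ z t)) (nhdsWithin 0 (Set.Ioi 0))
        (nhds (z • zetaVec)) := by
      have h1 : Tendsto (fun t : ℝ => (2 * t) • Wvec θ + z • zetaVec)
          (nhdsWithin 0 (Set.Ioi 0)) (nhds (z • zetaVec)) := by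
        have h1' := (hcont.tendsto 0).mono_left
          (nhdsWithin_le_nhds (s := Set.Ioi (0:ℝ)))
        simpa using h1'
      apply h1.congr'
      exact Filter.eventuallyEq_of_mem self_mem_nhdsWithin
        (fun t ht => (Fcylinv_cylPt θ z t ht).symm)
    rw [axis_pt]
    exact ((hE.tendsto _).comp hlim).inner tendsto_const_nhds
end
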